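/- On the Cartesian torus grid, let W_{ij} ∈ L^∞(T^d) (i,j = 1,…,n) satisfy the symmetry W_{ij}(x) = W_{ji}(−x) for a.e. x. Let u^{k−1}_i, u^k_i : G → [0,∞) have discrete masses bounded by m_i ≥ 0, i.e. ∑_{K∈G} m(K)·u^{k−1}_i(K) ≤ m_i and ∑_{K∈G} m(K)·u^k_i(K) ≤ m_i, let p^k_i be the mid-point potential p^k_i(K) = ∑_{j=1}^n ∑_{J∈G} m(J)·W^{ij}_{KJ}·(u^k_j(J) + u^{k−1}_j(J))/2, and set c* = max_{j=1,…,n} ∑_{i=1}^n ‖W_{ij}‖_{L^∞(T^d)}·m_i. Then the cross term satisfies X(u^k, p^k) ≤ c*·∑_{i=1}^n ∑_{σ∈E} τ_σ·(3·|D_σ √(u^k_i)|² + |D_σ √(u^{k−1}_i)|²). -/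

import Mathlib

open MeasureTheory Real Finset

namespace SG

instance : Fact ((0:ℝ) < 1) := ⟨one_pos⟩

variable {d : ℕ}

/-- Cells of the Cartesian torus grid. -/
abbrev Cell (M : Fin d → ℕ) := ∀ ℓ : Fin d, ZMod (M ℓ)

/-- Cell measure `m(K) = Δx₁⋯Δx_d`. -/
noncomputable def mK (M : Fin d → ℕ) : ℝ := ∏ ℓ, ((M ℓ : ℝ))⁻¹

/-- Transmissibility coefficient of an edge in direction `ℓ`:
`τ_σ = m(σ)/d_σ = m(K)·M_ℓ²`. -/
noncomputable def τ (M : Fin d → ℕ) (ℓ : Fin d) : ℝ := mK M * (M ℓ : ℝ) ^ 2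

/-- Shift a cell by `s` in direction `ℓ` (mod `M ℓ`). -/
def shift (M : Fin d → ℕ) (K : Cell M) (ℓ : Fin d) (s : ℤ) : Cell M :=
  Function.update K ℓ (K ℓ + (s : ZMod (M ℓ)))

/-- Hypothesis (H2): `B` is continuous on `[0,∞)` with `0 < B(s) ≤ 1` for `s ≥ 0`. -/
def H2 (B : ℝ → ℝ) : Prop :=
  ContinuousOn B (Set.Ici 0) ∧ ∀ s : ℝ, 0 ≤ s → 0 < B s ∧ B s ≤ 1

/-- Hypothesis (H3): `α ∈ [0,1)` and `B(s) ≥ 1 − α·s` for all `s ≥ 0`. -/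
def H3 (B : ℝ → ℝ) (α : ℝ) : Prop :=
  0 ≤ α ∧ α < 1 ∧ ∀ s : ℝ, 0 ≤ s → 1 - α * s ≤ B s

/-- The scaled weight function `B_κ(s) = κ·B(s/κ)`. -/
noncomputable def Bk (κ : ℝ) (B : ℝ → ℝ) (s : ℝ) : ℝ := κ * B (s / κ)

/-- Upwind value on the (oriented) edge from `K` to `L`. -/
noncomputable def upw {M : Fin d → ℕ} (u p : Cell M → ℝ) (K L : Cell M) : ℝ :=
  if 0 ≤ p L - p K then u L else u K

/-- Numerical flux `F_{K,σ}[u,p]` from `K` through the edge (in direction `ℓ`) to its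
neighbor `L`. -/
noncomputable def flux (M : Fin d → ℕ) (κ : ℝ) (B : ℝ → ℝ) (u p : Cell M → ℝ)
    (ℓ : Fin d) (K L : Cell M) : ℝ :=
  -(τ M ℓ) * (Bk κ B |p L - p K| * (u L - u K) + upw u p K L * (p L - p K))

/-- Sum of the numerical fluxes over the `2d` edges incident to `K`. -/
noncomputable def fluxSum (M : Fin d → ℕ) (κ : ℝ) (B : ℝ → ℝ) (u p : Cell M → ℝ)
    (K : Cell M) : ℝ :=
  ∑ ℓ : Fin d, (flux M κ B u p ℓ K (shift M K ℓ 1) + flux M κ B u p ℓ K (shift M K ℓ (-1)))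

/-- One implicit Euler finite-volume step with prescribed potential `p`. -/
def Step (M : Fin d → ℕ) (κ Δt : ℝ) (B : ℝ → ℝ) (uPrev u p : Cell M → ℝ) : Prop :=
  ∀ K : Cell M, mK M * (u K - uPrev K) / Δt + fluxSum M κ B u p K = 0

/-- Discrete Boltzmann entropy. -/
noncomputable def HB (M : Fin d → ℕ) [∀ ℓ, NeZero (M ℓ)] {n : ℕ}
    (u : Fin n → Cell M → ℝ) : ℝ :=
  ∑ i, ∑ K : Cell M, mK M * (u i K * (Real.log (u i K) - 1))

/-- Discrete Rao entropy associated to discrete kernels `Wd`. -/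
noncomputable def HR (M : Fin d → ℕ) [∀ ℓ, NeZero (M ℓ)] {n : ℕ}
    (Wd : Fin n → Fin n → Cell M → Cell M → ℝ) (u : Fin n → Cell M → ℝ) : ℝ :=
  (1/2) * ∑ i, ∑ j, ∑ K : Cell M, ∑ J : Cell M,
    mK M * mK M * Wd i j K J * u i K * u j J

/-- Boltzmann entropy production term `P_B`. -/
noncomputable def PB (M : Fin d → ℕ) [∀ ℓ, NeZero (M ℓ)] {n : ℕ} (κ : ℝ) (B : ℝ → ℝ)
    (u p : Fin n → Cell M → ℝ) : ℝ :=
  4 * ∑ i, ∑ K : Cell M, ∑ ℓ : Fin d,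
    τ M ℓ * Bk κ B |p i (shift M K ℓ 1) - p i K| *
      (Real.sqrt (u i (shift M K ℓ 1)) - Real.sqrt (u i K)) ^ 2

/-- Rao entropy production term `P_R`. -/
noncomputable def PR (M : Fin d → ℕ) [∀ ℓ, NeZero (M ℓ)] {n : ℕ}
    (u p : Fin n → Cell M → ℝ) : ℝ :=
  ∑ i, ∑ K : Cell M, ∑ ℓ : Fin d,
    τ M ℓ * upw (u i) (p i) K (shift M K ℓ 1) * (p i (shift M K ℓ 1) - p i K) ^ 2

/-- Cross term `X(u,p)`. -/
noncomputable def Xc (M : Fin d → ℕ) [∀ ℓ, NeZero (M ℓ)] {n : ℕ}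
    (u p : Fin n → Cell M → ℝ) : ℝ :=
  ∑ i, ∑ K : Cell M, ∑ ℓ : Fin d,
    τ M ℓ * (p i (shift M K ℓ 1) - p i K) * (u i (shift M K ℓ 1) - u i K)

/-- Discrete Fisher information `∑_i ∑_σ τ_σ |D_σ √u_i|²`. -/
noncomputable def Fisher (M : Fin d → ℕ) [∀ ℓ, NeZero (M ℓ)] {n : ℕ}
    (u : Fin n → Cell M → ℝ) : ℝ :=
  ∑ i, ∑ K : Cell M, ∑ ℓ : Fin d,
    τ M ℓ * (Real.sqrt (u i (shift M K ℓ 1)) - Real.sqrt (u i K)) ^ 2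

/-- The torus `T^d = (ℝ/ℤ)^d`. -/
abbrev Td (d : ℕ) := Fin d → AddCircle (1 : ℝ)

/-- The box `Q_K ⊆ T^d` corresponding to the cell `K`. -/
noncomputable def QK (M : Fin d → ℕ) (K : Cell M) : Set (Td d) :=
  Set.univ.pi fun ℓ => (fun t : ℝ => (t : AddCircle (1 : ℝ))) ''
    Set.Ico (((K ℓ).val : ℝ) / (M ℓ)) ((((K ℓ).val : ℝ) + 1) / (M ℓ))

/-- The discrete kernel `W_{KJ} = (m(K)m(J))⁻¹ ∫_{Q_K}∫_{Q_J} W(x−y) dy dx`. -/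
noncomputable def Wdisc (M : Fin d → ℕ) (W : Td d → ℝ) (K J : Cell M) : ℝ :=
  (mK M * mK M)⁻¹ * ∫ x in QK M K, ∫ y in QK M J, W (x - y)

/-- The discrete nonlocal potential `p_i(K) = ∑_j ∑_J m(J)·Wd^{ij}_{KJ}·u_j(J)`. -/
noncomputable def pot (M : Fin d → ℕ) [∀ ℓ, NeZero (M ℓ)] {n : ℕ}
    (Wd : Fin n → Fin n → Cell M → Cell M → ℝ) (u : Fin n → Cell M → ℝ)
    (i : Fin n) (K : Cell M) : ℝ :=
  ∑ j, ∑ J : Cell M, mK M * Wd i j K J * u j J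

/-- Discrete `L^q` norm of a cell function. -/
noncomputable def normq (M : Fin d → ℕ) [∀ ℓ, NeZero (M ℓ)] (q : ℝ)
    (u : Cell M → ℝ) : ℝ :=
  (∑ K : Cell M, mK M * |u K| ^ q) ^ (1/q)

/-- Discrete `L^q` norm of an edge function (dual-cell measure `m(Δ_σ) = m(σ)·d_σ = m(K)`). -/
noncomputable def enorm (M : Fin d → ℕ) [∀ ℓ, NeZero (M ℓ)] (q : ℝ)
    (w : Cell M → Fin d → ℝ) : ℝ :=
  (∑ K : Cell M, ∑ ℓ : Fin d, mK M * |w K ℓ| ^ q) ^ (1/q)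

/-- Magnitude of the discrete gradient on the edge `(K,ℓ)`:
`|∇^h_σ v| = d·D_σ v/d_σ`. -/
noncomputable def gradh (M : Fin d → ℕ) (v : Cell M → ℝ) (K : Cell M) (ℓ : Fin d) : ℝ :=
  d * (M ℓ : ℝ) * |v (shift M K ℓ 1) - v K|


/-! ### Auxiliary measure-theoretic lemmas -/

lemma volume_singleton_addCircle (x : AddCircle (1:ℝ)) :
    volume ({x} : Set (AddCircle (1:ℝ))) = 0 := by
  have := AddCircle.volume_closedBall (T := 1) (x := x) 0
  simp only [Metric.closedBall_zero] at this
  rw [this]; norm_num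

lemma volume_image_Ioo (a b : ℝ) (hab : a < b) (h : b ≤ a + 1) :
    volume ((fun t : ℝ => (t : AddCircle (1:ℝ))) '' Set.Ioo a b) = ENNReal.ofReal (b - a) := by
  have hopen : IsOpen ((fun t : ℝ => (t : AddCircle (1:ℝ))) '' Set.Ioo a b) :=
    QuotientAddGroup.isOpenMap_coe _ isOpen_Ioo
  rw [AddCircle.add_projection_respects_measure (1:ℝ) a hopen.measurableSet]
  have hset : (QuotientAddGroup.mk ⁻¹' ((fun t : ℝ => (t : AddCircle (1:ℝ))) '' Set.Ioo a b)
      ∩ Set.Ioc a (a + 1)) = Set.Ioo a b := by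
    ext x
    constructor
    · rintro ⟨⟨y, hy, hxy⟩, hx⟩
      simp only at hxy
      have h0 : ((x - y : ℝ) : AddCircle (1:ℝ)) = 0 := by
        rw [AddCircle.coe_sub, hxy, sub_self]
      rw [AddCircle.coe_eq_zero_iff] at h0
      obtain ⟨n, hn⟩ := h0
      have hn1 : (n : ℝ) = x - y := by simpa using hn
      have hlt : ((|n| : ℤ) : ℝ) < 1 := by
        rw [Int.cast_abs, abs_lt, hn1]
        constructor <;> [nlinarith [hy.2, hx.1]; nlinarith [hy.1, hx.2]]
      have hn0 : n = 0 := by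
        have h1 : |n| < 1 := by exact_mod_cast hlt
        rwa [Int.abs_lt_one_iff] at h1
      have : x = y := by rw [hn0] at hn1; push_cast at hn1; linarith
      rw [this]; exact hy
    · intro hx
      exact ⟨⟨x, hx, rfl⟩, hx.1, by linarith [hx.2]⟩
  rw [hset, Real.volume_Ioo]

lemma volume_image_Ico (a b : ℝ) (hab : a < b) (h : b ≤ a + 1) :
    volume ((fun t : ℝ => (t : AddCircle (1:ℝ))) '' Set.Ico a b) = ENNReal.ofReal (b - a) := by
  have hins : Set.Ico a b = insert a (Set.Ioo a b) := (Set.Ioo_insert_left hab).symm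
  rw [hins, Set.image_insert_eq]
  apply le_antisymm
  · calc volume (insert ((a:AddCircle (1:ℝ))) ((fun t : ℝ => (t : AddCircle (1:ℝ))) '' Set.Ioo a b))
        ≤ volume ({(a : AddCircle (1:ℝ))} : Set (AddCircle (1:ℝ)))
          + volume ((fun t : ℝ => (t : AddCircle (1:ℝ))) '' Set.Ioo a b) := by
          rw [Set.insert_eq]; exact measure_union_le _ _
      _ = ENNReal.ofReal (b - a) := by
          rw [volume_singleton_addCircle, volume_image_Ioo a b hab h, zero_add]
  · rw [← volume_image_Ioo a b hab h]
    exact measure_mono (Set.subset_insert _ _)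

variable {d : ℕ}

lemma Mpos (M : Fin d → ℕ) [∀ ℓ, NeZero (M ℓ)] (ℓ : Fin d) : 0 < (M ℓ : ℝ) := by
  exact_mod_cast Nat.pos_of_ne_zero (NeZero.ne (M ℓ))

lemma mK_pos (M : Fin d → ℕ) [∀ ℓ, NeZero (M ℓ)] : 0 < mK M :=
  Finset.prod_pos fun ℓ _ => inv_pos.mpr (Mpos M ℓ)

lemma volume_QK (M : Fin d → ℕ) [∀ ℓ, NeZero (M ℓ)] (K : Cell M) :
    volume (QK M K) = ENNReal.ofReal (mK M) := by
  rw [QK, MeasureTheory.volume_pi_pi]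
  have hcomp : ∀ ℓ : Fin d, volume ((fun t : ℝ => (t : AddCircle (1:ℝ))) ''
      Set.Ico (((K ℓ).val : ℝ) / (M ℓ)) ((((K ℓ).val : ℝ) + 1) / (M ℓ)))
      = ENNReal.ofReal ((M ℓ : ℝ))⁻¹ := by
    intro ℓ
    have hM := Mpos M ℓ
    rw [volume_image_Ico]
    · congr 1; field_simp; ring
    · gcongr
      linarith
    · have h1 : (1:ℝ) ≤ M ℓ := by
        exact_mod_cast Nat.one_le_iff_ne_zero.mpr (NeZero.ne (M ℓ))
      rw [div_le_iff₀ hM, add_mul, div_mul_cancel₀ _ (ne_of_gt hM), one_mul]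
      linarith
  simp_rw [hcomp]
  rw [← ENNReal.ofReal_prod_of_nonneg (fun ℓ _ => inv_nonneg.mpr (Mpos M ℓ).le)]
  rfl

instance negInvTd (d : ℕ) : (volume : Measure (Td d)).IsNegInvariant :=
  Measure.pi.isNegInvariant _

lemma measurePreserving_sub_const (d : ℕ) (x : Td d) :
    MeasurePreserving (fun y : Td d => x - y) volume volume := by
  have : (fun y : Td d => x - y) = (fun z : Td d => x + z) ∘ (fun y => -y) := by
    funext y; simp [sub_eq_add_neg]
  rw [this]
  exact (measurePreserving_add_left volume x).comp (Measure.measurePreserving_neg volume)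

lemma ae_norm_le_of_memTop {W : Td d → ℝ} (hW : MeasureTheory.MemLp W ⊤ volume) :
    ∀ᵐ z ∂(volume : Measure (Td d)), ‖W z‖ ≤ (MeasureTheory.eLpNorm W ⊤ volume).toReal := by
  have hfin : eLpNormEssSup W volume ≠ ⊤ := by
    rw [← eLpNorm_exponent_top]; exact hW.2.ne
  filter_upwards [ae_le_eLpNormEssSup (f := W) (μ := volume)] with z hz
  calc ‖W z‖ = ((‖W z‖₊ : ENNReal)).toReal := by simp
    _ ≤ (eLpNormEssSup W volume).toReal := ENNReal.toReal_mono hfin hz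
    _ = (MeasureTheory.eLpNorm W ⊤ volume).toReal := by rw [eLpNorm_exponent_top]

lemma Wdisc_abs_le (M : Fin d → ℕ) [∀ ℓ, NeZero (M ℓ)] (W : Td d → ℝ)
    (hW : MeasureTheory.MemLp W ⊤ volume) (K J : Cell M) :
    |Wdisc M W K J| ≤ (MeasureTheory.eLpNorm W ⊤ volume).toReal := by
  set C := (MeasureTheory.eLpNorm W ⊤ volume).toReal with hC
  have hmk := mK_pos M
  have hvol : ∀ L : Cell M, volume (QK M L) < ⊤ := fun L => by
    rw [volume_QK]; exact ENNReal.ofReal_lt_top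
  have htor : ∀ L : Cell M, (volume (QK M L)).toReal = mK M := fun L => by
    rw [volume_QK, ENNReal.toReal_ofReal hmk.le]
  have hinner : ∀ x : Td d, ‖∫ y in QK M J, W (x - y)‖ ≤ C * mK M := by
    intro x
    have hae : ∀ᵐ y ∂(volume : Measure (Td d)), ‖W (x - y)‖ ≤ C :=
      (measurePreserving_sub_const d x).quasiMeasurePreserving.ae (ae_norm_le_of_memTop hW)
    have := norm_setIntegral_le_of_norm_le_const_ae (μ := volume) (s := QK M J)
      (hvol J) (ae_restrict_of_ae hae)
    rwa [measureReal_def, htor J] at this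
  have houter : ‖∫ x in QK M K, ∫ y in QK M J, W (x - y)‖ ≤ C * mK M * mK M := by
    have := norm_setIntegral_le_of_norm_le_const_ae (μ := volume) (s := QK M K)
      (hvol K) (ae_restrict_of_ae (Filter.Eventually.of_forall hinner))
    rwa [measureReal_def, htor K] at this
  rw [Wdisc, abs_mul, abs_inv, abs_of_pos (by positivity : (0:ℝ) < mK M * mK M)]
  rw [Real.norm_eq_abs] at houter
  calc (mK M * mK M)⁻¹ * |∫ x in QK M K, ∫ y in QK M J, W (x - y)|
      ≤ (mK M * mK M)⁻¹ * (C * mK M * mK M) := by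
        apply mul_le_mul_of_nonneg_left houter (by positivity)
    _ = C := by field_simp

/-! ### Translation lemmas -/

lemma image_Ico_add (c a b : ℝ) :
    (fun x : AddCircle (1:ℝ) => ((c : ℝ) : AddCircle (1:ℝ)) + x) ''
      ((fun t : ℝ => (t : AddCircle (1:ℝ))) '' Set.Ico a b)
    = (fun t : ℝ => (t : AddCircle (1:ℝ))) '' Set.Ico (c + a) (c + b) := by
  rw [← Set.image_comp, ← Set.image_const_add_Ico, ← Set.image_comp]
  apply Set.image_congr
  intro t _
  simp [AddCircle.coe_add]

lemma image_Ico_period (a b : ℝ) :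
    (fun t : ℝ => (t : AddCircle (1:ℝ))) '' Set.Ico (1 + a) (1 + b)
    = (fun t : ℝ => (t : AddCircle (1:ℝ))) '' Set.Ico a b := by
  rw [← Set.image_const_add_Ico, ← Set.image_comp]
  apply Set.image_congr
  intro t _
  simp only [Function.comp_apply, AddCircle.coe_add]
  have h1 : ((1:ℝ) : AddCircle (1:ℝ)) = 0 := AddCircle.coe_period 1
  rw [h1, zero_add]

/-- Translation vector for one step in direction `ℓ`. -/
noncomputable def tvec (M : Fin d → ℕ) (ℓ : Fin d) : Td d :=
  fun m => if m = ℓ then ((((M ℓ : ℝ))⁻¹ : ℝ) : AddCircle (1:ℝ)) else 0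

lemma image_pi_add (t : Td d) (S : Fin d → Set (AddCircle (1:ℝ))) :
    (fun x : Td d => t + x) '' Set.univ.pi S
      = Set.univ.pi (fun m => (fun y => t m + y) '' S m) := by
  ext x
  constructor
  · rintro ⟨z, hz, rfl⟩
    intro m _
    exact ⟨z m, hz m (Set.mem_univ m), rfl⟩
  · intro hx
    refine ⟨fun m => x m - t m, fun m _ => ?_,
      by funext m; show t m + (x m - t m) = x m; rw [add_comm]; exact sub_add_cancel _ _⟩
    obtain ⟨y, hy, hxy⟩ := hx m (Set.mem_univ m)
    have hxt : x m - t m = y := by rw [← hxy]; exact add_sub_cancel_left _ _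
    show x m - t m ∈ S m
    rw [hxt]; exact hy

lemma val_add_one {n : ℕ} [NeZero n] (a : ZMod n) :
    (a + 1).val = (a.val + 1) % n := by
  rw [ZMod.val_add, ZMod.val_one_eq_one_mod, Nat.add_mod, Nat.mod_mod_of_dvd _ dvd_rfl,
    ← Nat.add_mod]

lemma QK_shift (M : Fin d → ℕ) [∀ ℓ, NeZero (M ℓ)] (K : Cell M) (ℓ : Fin d) :
    QK M (shift M K ℓ 1) = (fun x : Td d => tvec M ℓ + x) '' QK M K := by
  rw [QK, QK, image_pi_add]
  apply Set.pi_congr rfl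
  intro m _
  by_cases hm : m = ℓ
  · subst hm
    have hup : shift M K m 1 m = K m + 1 := by
      simp [shift, Function.update_self]
    rw [hup, tvec, if_pos rfl, image_Ico_add]
    have hM := Mpos M m
    have hv : (K m).val < M m := ZMod.val_lt (K m)
    have hval : (K m + 1).val = ((K m).val + 1) % M m := val_add_one (K m)
    rcases Nat.lt_or_ge ((K m).val + 1) (M m) with h | h
    · rw [hval, Nat.mod_eq_of_lt h]
      have e1 : (((K m).val + 1 : ℕ) : ℝ) / (M m) = ((M m : ℝ))⁻¹ + ((K m).val : ℝ) / (M m) := by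
        push_cast; field_simp; ring
      have e2 : ((((K m).val + 1 : ℕ) : ℝ) + 1) / (M m)
          = ((M m : ℝ))⁻¹ + (((K m).val : ℝ) + 1) / (M m) := by
        push_cast; field_simp; ring
      rw [e1, e2]
    · have hMe : (K m).val + 1 = M m := by omega
      rw [hval, hMe, Nat.mod_self]
      have e1 : ((M m : ℝ))⁻¹ + ((K m).val : ℝ) / (M m) = 1 + 0 := by
        have : ((K m).val : ℝ) = (M m : ℝ) - 1 := by
          have : (((K m).val + 1 : ℕ) : ℝ) = (M m : ℝ) := by exact_mod_cast hMe
          push_cast at this; linarith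
        rw [this]; field_simp; ring
      have e2 : ((M m : ℝ))⁻¹ + (((K m).val : ℝ) + 1) / (M m) = 1 + ((M m : ℝ))⁻¹ := by
        have : ((K m).val : ℝ) + 1 = (M m : ℝ) := by
          have : (((K m).val + 1 : ℕ) : ℝ) = (M m : ℝ) := by exact_mod_cast hMe
          push_cast at this; linarith
        rw [this]; field_simp; ring
      rw [e1, e2, image_Ico_period]
      norm_num
  · have hup : shift M K ℓ 1 m = K m := by
      simp [shift, Function.update_of_ne hm]
    rw [hup, tvec, if_neg hm]
    rw [show (fun y : AddCircle (1:ℝ) => (0:AddCircle (1:ℝ)) + y) = id from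
      funext fun y => zero_add y, Set.image_id]

lemma shift_shift (M : Fin d → ℕ) (K : Cell M) (ℓ : Fin d) (a b : ℤ) :
    shift M (shift M K ℓ a) ℓ b = shift M K ℓ (a + b) := by
  funext m
  by_cases hm : m = ℓ
  · subst hm
    simp only [shift, Function.update_self, Function.update_idem]
    push_cast
    ring_nf
  · simp only [shift, Function.update_of_ne hm, Function.update_idem]

lemma shift_zero (M : Fin d → ℕ) (K : Cell M) (ℓ : Fin d) : shift M K ℓ 0 = K := by
  funext m
  by_cases hm : m = ℓ
  · subst hm; simp [shift]
  · simp [shift, Function.update_of_ne hm]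

lemma shift_neg_one_one (M : Fin d → ℕ) (J : Cell M) (ℓ : Fin d) :
    shift M (shift M J ℓ (-1)) ℓ 1 = J := by
  rw [shift_shift]; norm_num; exact shift_zero M J ℓ

lemma shift_one_neg_one (M : Fin d → ℕ) (J : Cell M) (ℓ : Fin d) :
    shift M (shift M J ℓ 1) ℓ (-1) = J := by
  rw [shift_shift]; norm_num; exact shift_zero M J ℓ

lemma shift_bijective (M : Fin d → ℕ) (ℓ : Fin d) (s : ℤ) :
    Function.Bijective (fun K : Cell M => shift M K ℓ s) := by
  refine ⟨fun K L h => ?_, fun K => ⟨shift M K ℓ (-s), ?_⟩⟩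
  · have := congrArg (fun K => shift M K ℓ (-s)) h
    simpa [shift_shift, shift_zero] using this
  · simp only [shift_shift]
    rw [neg_add_cancel, shift_zero]

lemma setIntegral_translate (t : Td d) (s : Set (Td d)) (f : Td d → ℝ) :
    ∫ x in (fun x : Td d => t + x) '' s, f x = ∫ x in s, f (t + x) :=
  (measurePreserving_add_left volume t).setIntegral_image_emb
    (MeasurableEquiv.addLeft t).measurableEmbedding f s

lemma Wdisc_shift (M : Fin d → ℕ) [∀ ℓ, NeZero (M ℓ)] (W : Td d → ℝ) (ℓ : Fin d)
    (K J : Cell M) :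
    Wdisc M W (shift M K ℓ 1) J = Wdisc M W K (shift M J ℓ (-1)) := by
  rw [Wdisc, Wdisc]
  congr 1
  have hK : QK M (shift M K ℓ 1) = (fun x : Td d => tvec M ℓ + x) '' QK M K := QK_shift M K ℓ
  have hJ : QK M J = (fun x : Td d => tvec M ℓ + x) '' QK M (shift M J ℓ (-1)) := by
    conv_lhs => rw [← shift_neg_one_one M J ℓ]
    exact QK_shift M (shift M J ℓ (-1)) ℓ
  rw [hK, setIntegral_translate]
  simp only [hJ, setIntegral_translate]
  simp only [show ∀ x y : Td d, tvec M ℓ + x - (tvec M ℓ + y) = x - y from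
    fun x y => by abel]

lemma eLpNorm_symm {n : ℕ} (W : Fin n → Fin n → Td d → ℝ)
    (hW : ∀ i j, MeasureTheory.MemLp (W i j) ⊤ (volume : Measure (Td d)))
    (hsym : ∀ i j, ∀ᵐ x ∂(volume : Measure (Td d)), W i j x = W j i (-x)) (i j : Fin n) :
    MeasureTheory.eLpNorm (W i j) ⊤ (volume : Measure (Td d))
      = MeasureTheory.eLpNorm (W j i) ⊤ (volume : Measure (Td d)) := by
  calc MeasureTheory.eLpNorm (W i j) ⊤ volume
      = MeasureTheory.eLpNorm (fun x : Td d => W j i (-x)) ⊤ volume :=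
        MeasureTheory.eLpNorm_congr_ae (hsym i j)
    _ = MeasureTheory.eLpNorm (W j i) ⊤ volume :=
        MeasureTheory.eLpNorm_comp_measurePreserving (hW j i).aestronglyMeasurable
          (Measure.measurePreserving_neg volume)

/-! ### Discrete estimation lemmas -/

lemma τ_nonneg (M : Fin d → ℕ) [∀ ℓ, NeZero (M ℓ)] (ℓ : Fin d) : 0 ≤ τ M ℓ := by
  have := mK_pos M; rw [τ]; positivity

lemma sum_shift (M : Fin d → ℕ) [∀ ℓ, NeZero (M ℓ)] (ℓ : Fin d) (s : ℤ)
    (f : Cell M → ℝ) : ∑ K : Cell M, f (shift M K ℓ s) = ∑ K : Cell M, f K :=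
  Function.Bijective.sum_comp (shift_bijective M ℓ s) f

lemma sum_mul_le_sqrt {α : Type*} [Fintype α] (f g : α → ℝ) :
    ∑ a : α, f a * g a
      ≤ Real.sqrt (∑ a : α, (f a) ^ 2) * Real.sqrt (∑ a : α, (g a) ^ 2) := by
  have h := Finset.sum_mul_sq_le_sq_mul_sq Finset.univ f g
  calc ∑ a : α, f a * g a ≤ |∑ a : α, f a * g a| := le_abs_self _
    _ = Real.sqrt ((∑ a : α, f a * g a) ^ 2) := (Real.sqrt_sq_eq_abs _).symm
    _ ≤ Real.sqrt ((∑ a : α, (f a) ^ 2) * ∑ a : α, (g a) ^ 2) := Real.sqrt_le_sqrt h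
    _ = _ := Real.sqrt_mul (Finset.sum_nonneg fun a _ => sq_nonneg _) _

lemma young4 (a b c d : ℝ) (ha : 0 ≤ a) (hb : 0 ≤ b) (hc : 0 ≤ c) (hd : 0 ≤ d) :
    2 * (Real.sqrt a * Real.sqrt b * (Real.sqrt c * Real.sqrt d))
      ≤ a * d + c * b := by
  nlinarith [sq_nonneg (Real.sqrt a * Real.sqrt d - Real.sqrt c * Real.sqrt b),
    Real.sq_sqrt ha, Real.sq_sqrt hb, Real.sq_sqrt hc, Real.sq_sqrt hd,
    Real.sqrt_nonneg a, Real.sqrt_nonneg b, Real.sqrt_nonneg c, Real.sqrt_nonneg d,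
    mul_nonneg (Real.sqrt_nonneg a) (Real.sqrt_nonneg d),
    mul_nonneg (Real.sqrt_nonneg c) (Real.sqrt_nonneg b)]

lemma Abound (M : Fin d → ℕ) [∀ ℓ, NeZero (M ℓ)] (ℓ : Fin d) (w : Cell M → ℝ)
    (hw : ∀ K, 0 ≤ w K) (m : ℝ) (hmass : ∑ K : Cell M, mK M * w K ≤ m) :
    ∑ K : Cell M, mK M * (M ℓ : ℝ) * |w (shift M K ℓ 1) - w K|
      ≤ 2 * Real.sqrt m * Real.sqrt (∑ K : Cell M,
          τ M ℓ * (Real.sqrt (w (shift M K ℓ 1)) - Real.sqrt (w K)) ^ 2) := by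
  have hmk := mK_pos M
  have hM := Mpos M ℓ
  have hm0 : 0 ≤ m :=
    le_trans (Finset.sum_nonneg fun K _ => mul_nonneg hmk.le (hw K)) hmass
  set f : Cell M → ℝ := fun K =>
    Real.sqrt (τ M ℓ) * |Real.sqrt (w (shift M K ℓ 1)) - Real.sqrt (w K)| with hf
  set g : Cell M → ℝ := fun K =>
    Real.sqrt (mK M) * (Real.sqrt (w (shift M K ℓ 1)) + Real.sqrt (w K)) with hg
  have hstep1 : ∀ K : Cell M, mK M * (M ℓ : ℝ) * |w (shift M K ℓ 1) - w K| = f K * g K := by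
    intro K
    have hd : w (shift M K ℓ 1) - w K
        = (Real.sqrt (w (shift M K ℓ 1)) - Real.sqrt (w K))
          * (Real.sqrt (w (shift M K ℓ 1)) + Real.sqrt (w K)) := by
      have h1 := Real.sq_sqrt (hw (shift M K ℓ 1))
      have h2 := Real.sq_sqrt (hw K)
      nlinarith [h1, h2]
    have habs : |w (shift M K ℓ 1) - w K|
        = |Real.sqrt (w (shift M K ℓ 1)) - Real.sqrt (w K)|
          * (Real.sqrt (w (shift M K ℓ 1)) + Real.sqrt (w K)) := by
      rw [hd, abs_mul, abs_of_nonneg (add_nonneg (Real.sqrt_nonneg _) (Real.sqrt_nonneg _))]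
    have hτ : Real.sqrt (τ M ℓ) * Real.sqrt (mK M) = mK M * (M ℓ : ℝ) := by
      rw [τ, ← Real.sqrt_mul (by positivity)]
      rw [show mK M * (M ℓ : ℝ) ^ 2 * mK M = (mK M * (M ℓ : ℝ)) ^ 2 by ring]
      exact Real.sqrt_sq (by positivity)
    rw [habs, hf, hg]
    simp only
    rw [← hτ]; ring
  have hsum2 : ∑ K : Cell M, (f K) ^ 2
      = ∑ K : Cell M, τ M ℓ * (Real.sqrt (w (shift M K ℓ 1)) - Real.sqrt (w K)) ^ 2 := by
    refine Finset.sum_congr rfl fun K _ => ?_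
    rw [hf]; simp only
    rw [mul_pow, Real.sq_sqrt (τ_nonneg M ℓ), sq_abs]
  have hsum3 : ∑ K : Cell M, (g K) ^ 2 ≤ 4 * m := by
    have hb : ∀ K : Cell M, (g K) ^ 2 ≤ mK M * (2 * (w (shift M K ℓ 1) + w K)) := by
      intro K
      rw [hg]; simp only
      rw [mul_pow, Real.sq_sqrt hmk.le]
      have h1 := Real.sq_sqrt (hw (shift M K ℓ 1))
      have h2 := Real.sq_sqrt (hw K)
      nlinarith [sq_nonneg (Real.sqrt (w (shift M K ℓ 1)) - Real.sqrt (w K))]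
    calc ∑ K : Cell M, (g K) ^ 2 ≤ ∑ K : Cell M, mK M * (2 * (w (shift M K ℓ 1) + w K)) :=
          Finset.sum_le_sum fun K _ => hb K
      _ = 2 * ((∑ K : Cell M, mK M * w (shift M K ℓ 1)) + ∑ K : Cell M, mK M * w K) := by
          rw [← Finset.sum_add_distrib, Finset.mul_sum]
          exact Finset.sum_congr rfl fun K _ => by ring
      _ = 2 * ((∑ K : Cell M, mK M * w K) + ∑ K : Cell M, mK M * w K) := by
          rw [sum_shift M ℓ 1 (fun K => mK M * w K)]
      _ ≤ 4 * m := by linarith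
  calc ∑ K : Cell M, mK M * (M ℓ : ℝ) * |w (shift M K ℓ 1) - w K|
      = ∑ K : Cell M, f K * g K := Finset.sum_congr rfl fun K _ => hstep1 K
    _ ≤ Real.sqrt (∑ K : Cell M, (f K) ^ 2) * Real.sqrt (∑ K : Cell M, (g K) ^ 2) :=
        sum_mul_le_sqrt f g
    _ ≤ Real.sqrt (∑ K : Cell M, (f K) ^ 2) * Real.sqrt (4 * m) :=
        mul_le_mul_of_nonneg_left (Real.sqrt_le_sqrt hsum3) (Real.sqrt_nonneg _)
    _ = 2 * Real.sqrt m * Real.sqrt (∑ K : Cell M,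
          τ M ℓ * (Real.sqrt (w (shift M K ℓ 1)) - Real.sqrt (w K)) ^ 2) := by
        rw [hsum2, show (4:ℝ) * m = 2 ^ 2 * m by ring,
          Real.sqrt_mul (by positivity : (0:ℝ) ≤ 2^2), Real.sqrt_sq (by norm_num : (0:ℝ) ≤ 2)]
        ring

/-- estimate of the cross term by the discrete Fisher informations for
bounded kernels and mid-point potentials. -/
theorem cross_term_estimate_midpoint {d n : ℕ} (hn : 0 < n) (M : Fin d → ℕ)
    [∀ ℓ, NeZero (M ℓ)]
    (W : Fin n → Fin n → Td d → ℝ)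
    (hW : ∀ i j, MeasureTheory.MemLp (W i j) ⊤)
    (hsym : ∀ i j, ∀ᵐ x : Td d, W i j x = W j i (-x))
    (m_ : Fin n → ℝ) (hm : ∀ i, 0 ≤ m_ i)
    (uprev u : Fin n → Cell M → ℝ)
    (hprev : ∀ i K, 0 ≤ uprev i K) (hu : ∀ i K, 0 ≤ u i K)
    (hmassprev : ∀ i, ∑ K : Cell M, mK M * uprev i K ≤ m_ i)
    (hmass : ∀ i, ∑ K : Cell M, mK M * u i K ≤ m_ i) :
    Xc M u (pot M (fun i j => Wdisc M (W i j)) (fun j J => (u j J + uprev j J) / 2))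
      ≤ (Finset.univ.sup' (Finset.univ_nonempty_iff.mpr (Fin.pos_iff_nonempty.mp hn))
            fun j => ∑ i, (MeasureTheory.eLpNorm (W i j) ⊤ volume).toReal * m_ i)
        * ∑ i, ∑ K : Cell M, ∑ ℓ : Fin d, τ M ℓ *
            (3 * (Real.sqrt (u i (shift M K ℓ 1)) - Real.sqrt (u i K)) ^ 2
              + (Real.sqrt (uprev i (shift M K ℓ 1)) - Real.sqrt (uprev i K)) ^ 2) := by
  classical
  have hmk := mK_pos M
  set C : Fin n → Fin n → ℝ :=
    fun i j => (MeasureTheory.eLpNorm (W i j) ⊤ volume).toReal with hCdef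
  set Wd : Fin n → Fin n → Cell M → Cell M → ℝ := fun i j => Wdisc M (W i j) with hWdd
  set v : Fin n → Cell M → ℝ := fun j J => (u j J + uprev j J) / 2 with hvdef
  set p : Fin n → Cell M → ℝ := pot M Wd v with hpdef
  set cstar : ℝ := Finset.univ.sup'
    (Finset.univ_nonempty_iff.mpr (Fin.pos_iff_nonempty.mp hn))
    (fun j => ∑ i, C i j * m_ i) with hcs
  -- basic facts
  have hC0 : ∀ i j, 0 ≤ C i j := fun i j => ENNReal.toReal_nonneg
  have hCsym : ∀ i j, C i j = C j i := fun i j => by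
    rw [hCdef]; simp only; rw [eLpNorm_symm W hW hsym i j]
  have hWb : ∀ i j K J, |Wd i j K J| ≤ C i j := fun i j K J =>
    Wdisc_abs_le M (W i j) (hW i j) K J
  have hv0 : ∀ j J, 0 ≤ v j J := fun j J =>
    div_nonneg (add_nonneg (hu j J) (hprev j J)) (by norm_num)
  have hvmass : ∀ j, ∑ J : Cell M, mK M * v j J ≤ m_ j := by
    intro j
    rw [hvdef]
    simp only
    calc ∑ J : Cell M, mK M * ((u j J + uprev j J) / 2)
        = ((∑ J : Cell M, mK M * u j J) + ∑ J : Cell M, mK M * uprev j J) / 2 := by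
          rw [← Finset.sum_add_distrib, Finset.sum_div]
          exact Finset.sum_congr rfl fun J _ => by ring
      _ ≤ (m_ j + m_ j) / 2 := by
          gcongr
          · exact hmass j
          · exact hmassprev j
      _ = m_ j := by ring
  -- Fisher informations per species and direction
  set Fu : Fin n → Fin d → ℝ := fun i ℓ => ∑ K : Cell M,
    τ M ℓ * (Real.sqrt (u i (shift M K ℓ 1)) - Real.sqrt (u i K)) ^ 2 with hFu
  set Fp : Fin n → Fin d → ℝ := fun i ℓ => ∑ K : Cell M,
    τ M ℓ * (Real.sqrt (uprev i (shift M K ℓ 1)) - Real.sqrt (uprev i K)) ^ 2 with hFp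
  have hFu0 : ∀ i ℓ, 0 ≤ Fu i ℓ := fun i ℓ =>
    Finset.sum_nonneg fun K _ => mul_nonneg (τ_nonneg M ℓ) (sq_nonneg _)
  have hFp0 : ∀ i ℓ, 0 ≤ Fp i ℓ := fun i ℓ =>
    Finset.sum_nonneg fun K _ => mul_nonneg (τ_nonneg M ℓ) (sq_nonneg _)
  -- column bounds
  have hcol : ∀ j, ∑ i, C i j * m_ i ≤ cstar := fun j =>
    Finset.le_sup' (fun j => ∑ i, C i j * m_ i) (Finset.mem_univ j)
  have hrow : ∀ i, ∑ j, C i j * m_ j ≤ cstar := by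
    intro i
    have : ∑ j, C i j * m_ j = ∑ j, C j i * m_ j :=
      Finset.sum_congr rfl fun j _ => by rw [hCsym i j]
    rw [this]
    exact hcol i
  -- A-type bounds
  have hAu : ∀ (i : Fin n) (ℓ : Fin d),
      ∑ K : Cell M, mK M * (M ℓ : ℝ) * |u i (shift M K ℓ 1) - u i K|
        ≤ 2 * Real.sqrt (m_ i) * Real.sqrt (Fu i ℓ) := fun i ℓ =>
    Abound M ℓ (u i) (hu i) (m_ i) (hmass i)
  have hAp : ∀ (i : Fin n) (ℓ : Fin d),
      ∑ K : Cell M, mK M * (M ℓ : ℝ) * |uprev i (shift M K ℓ 1) - uprev i K|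
        ≤ 2 * Real.sqrt (m_ i) * Real.sqrt (Fp i ℓ) := fun i ℓ =>
    Abound M ℓ (uprev i) (hprev i) (m_ i) (hmassprev i)
  have hAnn : ∀ (w : Fin n → Cell M → ℝ) (j : Fin n) (ℓ : Fin d),
      0 ≤ ∑ J : Cell M, mK M * (M ℓ : ℝ) * |w j (shift M J ℓ 1) - w j J| := fun w j ℓ =>
    Finset.sum_nonneg fun J _ =>
      mul_nonneg (mul_nonneg hmk.le (Mpos M ℓ).le) (abs_nonneg _)
  have hAv : ∀ (j : Fin n) (ℓ : Fin d),
      ∑ J : Cell M, mK M * (M ℓ : ℝ) * |v j (shift M J ℓ 1) - v j J|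
        ≤ Real.sqrt (m_ j) * (Real.sqrt (Fu j ℓ) + Real.sqrt (Fp j ℓ)) := by
    intro j ℓ
    have hptw : ∀ J : Cell M, mK M * (M ℓ : ℝ) * |v j (shift M J ℓ 1) - v j J|
        ≤ (mK M * (M ℓ : ℝ) * |u j (shift M J ℓ 1) - u j J|
          + mK M * (M ℓ : ℝ) * |uprev j (shift M J ℓ 1) - uprev j J|) / 2 := by
      intro J
      have hdv : v j (shift M J ℓ 1) - v j J
          = ((u j (shift M J ℓ 1) - u j J) + (uprev j (shift M J ℓ 1) - uprev j J)) / 2 := by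
        rw [hvdef]; simp only; ring
      rw [hdv, abs_div, abs_two]
      have htri := abs_add_le (u j (shift M J ℓ 1) - u j J) (uprev j (shift M J ℓ 1) - uprev j J)
      have hc : 0 ≤ mK M * (M ℓ : ℝ) := mul_nonneg hmk.le (Mpos M ℓ).le
      nlinarith [mul_le_mul_of_nonneg_left htri hc]
    calc ∑ J : Cell M, mK M * (M ℓ : ℝ) * |v j (shift M J ℓ 1) - v j J|
        ≤ ∑ J : Cell M, (mK M * (M ℓ : ℝ) * |u j (shift M J ℓ 1) - u j J|
          + mK M * (M ℓ : ℝ) * |uprev j (shift M J ℓ 1) - uprev j J|) / 2 :=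
          Finset.sum_le_sum fun J _ => hptw J
      _ = ((∑ J : Cell M, mK M * (M ℓ : ℝ) * |u j (shift M J ℓ 1) - u j J|)
          + ∑ J : Cell M, mK M * (M ℓ : ℝ) * |uprev j (shift M J ℓ 1) - uprev j J|) / 2 := by
          rw [← Finset.sum_div, Finset.sum_add_distrib]
      _ ≤ (2 * Real.sqrt (m_ j) * Real.sqrt (Fu j ℓ)
          + 2 * Real.sqrt (m_ j) * Real.sqrt (Fp j ℓ)) / 2 := by
          gcongr
          · exact hAu j ℓ
          · exact hAp j ℓ
      _ = Real.sqrt (m_ j) * (Real.sqrt (Fu j ℓ) + Real.sqrt (Fp j ℓ)) := by ring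
  -- potential difference identity
  have hpd : ∀ (i : Fin n) (ℓ : Fin d) (K : Cell M),
      p i (shift M K ℓ 1) - p i K
        = ∑ j, ∑ J : Cell M, mK M * Wd i j K J * (v j (shift M J ℓ 1) - v j J) := by
    intro i ℓ K
    have h1 : p i (shift M K ℓ 1)
        = ∑ j, ∑ J : Cell M, mK M * Wd i j K J * v j (shift M J ℓ 1) := by
      rw [hpdef]
      show pot M Wd v i (shift M K ℓ 1) = _
      rw [pot]
      refine Finset.sum_congr rfl fun j _ => ?_
      calc ∑ J : Cell M, mK M * Wd i j (shift M K ℓ 1) J * v j J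
          = ∑ J : Cell M, mK M * Wd i j K (shift M J ℓ (-1)) * v j J := by
            refine Finset.sum_congr rfl fun J _ => ?_
            rw [hWdd]
            simp only
            rw [Wdisc_shift M (W i j) ℓ K J]
        _ = ∑ J : Cell M, mK M * Wd i j K J * v j (shift M J ℓ 1) := by
            rw [← sum_shift M ℓ 1
              (fun J => mK M * Wd i j K (shift M J ℓ (-1)) * v j J)]
            refine Finset.sum_congr rfl fun J _ => ?_
            rw [shift_one_neg_one M J ℓ]
    have h2 : p i K = ∑ j, ∑ J : Cell M, mK M * Wd i j K J * v j J := by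
      rw [hpdef]
      show pot M Wd v i K = _
      rw [pot]
    rw [h1, h2, ← Finset.sum_sub_distrib]
    refine Finset.sum_congr rfl fun j _ => ?_
    rw [← Finset.sum_sub_distrib]
    refine Finset.sum_congr rfl fun J _ => by ring
  -- main chain
  set Su : ℝ := ∑ i, ∑ ℓ : Fin d, Fu i ℓ with hSu
  set Sp : ℝ := ∑ i, ∑ ℓ : Fin d, Fp i ℓ with hSp
  have hkey : Xc M u p ≤ cstar * (3 * Su + Sp) := by
    have step1 : Xc M u p ≤ ∑ i, ∑ ℓ : Fin d, ∑ j,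
        C i j * ((∑ K : Cell M, mK M * (M ℓ : ℝ) * |u i (shift M K ℓ 1) - u i K|)
          * (∑ J : Cell M, mK M * (M ℓ : ℝ) * |v j (shift M J ℓ 1) - v j J|)) := by
      rw [Xc]
      have hcomm : ∀ i : Fin n, ∑ K : Cell M, ∑ ℓ : Fin d,
          τ M ℓ * (p i (shift M K ℓ 1) - p i K) * (u i (shift M K ℓ 1) - u i K)
          = ∑ ℓ : Fin d, ∑ K : Cell M,
          τ M ℓ * (p i (shift M K ℓ 1) - p i K) * (u i (shift M K ℓ 1) - u i K) :=
        fun i => Finset.sum_comm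
      rw [Finset.sum_congr rfl fun i _ => hcomm i]
      refine Finset.sum_le_sum fun i _ => Finset.sum_le_sum fun ℓ _ => ?_
      calc ∑ K : Cell M,
            τ M ℓ * (p i (shift M K ℓ 1) - p i K) * (u i (shift M K ℓ 1) - u i K)
          = ∑ K : Cell M, ∑ j, ∑ J : Cell M,
            τ M ℓ * (mK M * Wd i j K J * (v j (shift M J ℓ 1) - v j J))
              * (u i (shift M K ℓ 1) - u i K) := by
            refine Finset.sum_congr rfl fun K _ => ?_
            rw [hpd i ℓ K, Finset.mul_sum, Finset.sum_mul]
            refine Finset.sum_congr rfl fun j _ => ?_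
            rw [Finset.mul_sum, Finset.sum_mul]
        _ = ∑ j, ∑ K : Cell M, ∑ J : Cell M,
            τ M ℓ * (mK M * Wd i j K J * (v j (shift M J ℓ 1) - v j J))
              * (u i (shift M K ℓ 1) - u i K) := Finset.sum_comm
        _ ≤ ∑ j, ∑ K : Cell M, ∑ J : Cell M,
            C i j * ((mK M * (M ℓ : ℝ) * |u i (shift M K ℓ 1) - u i K|)
              * (mK M * (M ℓ : ℝ) * |v j (shift M J ℓ 1) - v j J|)) := by
            refine Finset.sum_le_sum fun j _ => Finset.sum_le_sum fun K _ =>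
              Finset.sum_le_sum fun J _ => ?_
            have habs : |τ M ℓ * (mK M * Wd i j K J * (v j (shift M J ℓ 1) - v j J))
                * (u i (shift M K ℓ 1) - u i K)|
                = (mK M * (M ℓ : ℝ)) * (mK M * (M ℓ : ℝ)) * |Wd i j K J|
                  * (|v j (shift M J ℓ 1) - v j J| * |u i (shift M K ℓ 1) - u i K|) := by
              rw [abs_mul, abs_mul, abs_mul, abs_mul,
                abs_of_nonneg (τ_nonneg M ℓ), abs_of_nonneg hmk.le, τ]
              ring
            calc τ M ℓ * (mK M * Wd i j K J * (v j (shift M J ℓ 1) - v j J))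
                  * (u i (shift M K ℓ 1) - u i K)
                ≤ |τ M ℓ * (mK M * Wd i j K J * (v j (shift M J ℓ 1) - v j J))
                  * (u i (shift M K ℓ 1) - u i K)| := le_abs_self _
              _ = (mK M * (M ℓ : ℝ)) * (mK M * (M ℓ : ℝ)) * |Wd i j K J|
                  * (|v j (shift M J ℓ 1) - v j J| * |u i (shift M K ℓ 1) - u i K|) := habs
              _ ≤ (mK M * (M ℓ : ℝ)) * (mK M * (M ℓ : ℝ)) * C i j
                  * (|v j (shift M J ℓ 1) - v j J| * |u i (shift M K ℓ 1) - u i K|) := by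
                  have hA : 0 ≤ (mK M * (M ℓ : ℝ)) * (mK M * (M ℓ : ℝ)) :=
                    mul_nonneg (mul_nonneg hmk.le (Mpos M ℓ).le)
                      (mul_nonneg hmk.le (Mpos M ℓ).le)
                  exact mul_le_mul_of_nonneg_right
                    (mul_le_mul_of_nonneg_left (hWb i j K J) hA)
                    (mul_nonneg (abs_nonneg _) (abs_nonneg _))
              _ = C i j * ((mK M * (M ℓ : ℝ) * |u i (shift M K ℓ 1) - u i K|)
                  * (mK M * (M ℓ : ℝ) * |v j (shift M J ℓ 1) - v j J|)) := by ring
        _ = ∑ j, C i j * ((∑ K : Cell M, mK M * (M ℓ : ℝ) * |u i (shift M K ℓ 1) - u i K|)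
              * (∑ J : Cell M, mK M * (M ℓ : ℝ) * |v j (shift M J ℓ 1) - v j J|)) := by
            refine Finset.sum_congr rfl fun j _ => ?_
            rw [Finset.sum_mul_sum, Finset.mul_sum]
            refine Finset.sum_congr rfl fun K _ => ?_
            rw [Finset.mul_sum]
    have step2 : ∀ (i j : Fin n) (ℓ : Fin d),
        C i j * ((∑ K : Cell M, mK M * (M ℓ : ℝ) * |u i (shift M K ℓ 1) - u i K|)
          * (∑ J : Cell M, mK M * (M ℓ : ℝ) * |v j (shift M J ℓ 1) - v j J|))
        ≤ C i j * ((m_ i * Fu j ℓ + m_ j * Fu i ℓ) + (m_ i * Fp j ℓ + m_ j * Fu i ℓ)) := by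
      intro i j ℓ
      have hb1 : (∑ K : Cell M, mK M * (M ℓ : ℝ) * |u i (shift M K ℓ 1) - u i K|)
            * (∑ J : Cell M, mK M * (M ℓ : ℝ) * |v j (shift M J ℓ 1) - v j J|)
          ≤ (2 * Real.sqrt (m_ i) * Real.sqrt (Fu i ℓ))
            * (Real.sqrt (m_ j) * (Real.sqrt (Fu j ℓ) + Real.sqrt (Fp j ℓ))) := by
        apply mul_le_mul (hAu i ℓ) (hAv j ℓ) (hAnn v j ℓ)
        positivity
      have hy1 : 2 * (Real.sqrt (m_ i) * Real.sqrt (Fu i ℓ)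
            * (Real.sqrt (m_ j) * Real.sqrt (Fu j ℓ)))
          ≤ m_ i * Fu j ℓ + m_ j * Fu i ℓ :=
        young4 (m_ i) (Fu i ℓ) (m_ j) (Fu j ℓ) (hm i) (hFu0 i ℓ) (hm j) (hFu0 j ℓ)
      have hy2 : 2 * (Real.sqrt (m_ i) * Real.sqrt (Fu i ℓ)
            * (Real.sqrt (m_ j) * Real.sqrt (Fp j ℓ)))
          ≤ m_ i * Fp j ℓ + m_ j * Fu i ℓ :=
        young4 (m_ i) (Fu i ℓ) (m_ j) (Fp j ℓ) (hm i) (hFu0 i ℓ) (hm j) (hFp0 j ℓ)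
      calc C i j * ((∑ K : Cell M, mK M * (M ℓ : ℝ) * |u i (shift M K ℓ 1) - u i K|)
            * (∑ J : Cell M, mK M * (M ℓ : ℝ) * |v j (shift M J ℓ 1) - v j J|))
          ≤ C i j * ((2 * Real.sqrt (m_ i) * Real.sqrt (Fu i ℓ))
            * (Real.sqrt (m_ j) * (Real.sqrt (Fu j ℓ) + Real.sqrt (Fp j ℓ)))) :=
            mul_le_mul_of_nonneg_left hb1 (hC0 i j)
        _ = C i j * (2 * (Real.sqrt (m_ i) * Real.sqrt (Fu i ℓ)
              * (Real.sqrt (m_ j) * Real.sqrt (Fu j ℓ)))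
            + 2 * (Real.sqrt (m_ i) * Real.sqrt (Fu i ℓ)
              * (Real.sqrt (m_ j) * Real.sqrt (Fp j ℓ)))) := by ring
        _ ≤ C i j * ((m_ i * Fu j ℓ + m_ j * Fu i ℓ) + (m_ i * Fp j ℓ + m_ j * Fu i ℓ)) := by
            apply mul_le_mul_of_nonneg_left _ (hC0 i j)
            exact add_le_add hy1 hy2
    -- sum up
    have step3 : ∑ i, ∑ ℓ : Fin d, ∑ j,
        C i j * ((m_ i * Fu j ℓ + m_ j * Fu i ℓ) + (m_ i * Fp j ℓ + m_ j * Fu i ℓ))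
        ≤ cstar * (3 * Su + Sp) := by
      have hexp : ∀ (i j : Fin n) (ℓ : Fin d),
          C i j * ((m_ i * Fu j ℓ + m_ j * Fu i ℓ) + (m_ i * Fp j ℓ + m_ j * Fu i ℓ))
          = C i j * m_ i * Fu j ℓ + C i j * m_ j * Fu i ℓ
            + (C i j * m_ i * Fp j ℓ + C i j * m_ j * Fu i ℓ) := fun i j ℓ => by ring
      have hT1 : ∑ i, ∑ ℓ : Fin d, ∑ j, C i j * m_ i * Fu j ℓ ≤ cstar * Su := by
        calc ∑ i, ∑ ℓ : Fin d, ∑ j, C i j * m_ i * Fu j ℓ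
            = ∑ ℓ : Fin d, ∑ j, (∑ i, C i j * m_ i) * Fu j ℓ := by
              rw [Finset.sum_comm]
              refine Finset.sum_congr rfl fun ℓ _ => ?_
              rw [Finset.sum_comm]
              refine Finset.sum_congr rfl fun j _ => ?_
              rw [Finset.sum_mul]
          _ ≤ ∑ ℓ : Fin d, ∑ j, cstar * Fu j ℓ := by
              refine Finset.sum_le_sum fun ℓ _ => Finset.sum_le_sum fun j _ => ?_
              exact mul_le_mul_of_nonneg_right (hcol j) (hFu0 j ℓ)
          _ = cstar * Su := by
              rw [hSu, Finset.mul_sum, Finset.sum_comm]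
              refine Finset.sum_congr rfl fun ℓ _ => ?_
              rw [Finset.mul_sum]
      have hT2 : ∑ i, ∑ ℓ : Fin d, ∑ j, C i j * m_ j * Fu i ℓ ≤ cstar * Su := by
        calc ∑ i, ∑ ℓ : Fin d, ∑ j, C i j * m_ j * Fu i ℓ
            = ∑ i, ∑ ℓ : Fin d, (∑ j, C i j * m_ j) * Fu i ℓ := by
              refine Finset.sum_congr rfl fun i _ => Finset.sum_congr rfl fun ℓ _ => ?_
              rw [Finset.sum_mul]
          _ ≤ ∑ i, ∑ ℓ : Fin d, cstar * Fu i ℓ := by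
              refine Finset.sum_le_sum fun i _ => Finset.sum_le_sum fun ℓ _ => ?_
              exact mul_le_mul_of_nonneg_right (hrow i) (hFu0 i ℓ)
          _ = cstar * Su := by
              rw [hSu, Finset.mul_sum]
              refine Finset.sum_congr rfl fun i _ => ?_
              rw [Finset.mul_sum]
      have hT3 : ∑ i, ∑ ℓ : Fin d, ∑ j, C i j * m_ i * Fp j ℓ ≤ cstar * Sp := by
        calc ∑ i, ∑ ℓ : Fin d, ∑ j, C i j * m_ i * Fp j ℓ
            = ∑ ℓ : Fin d, ∑ j, (∑ i, C i j * m_ i) * Fp j ℓ := by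
              rw [Finset.sum_comm]
              refine Finset.sum_congr rfl fun ℓ _ => ?_
              rw [Finset.sum_comm]
              refine Finset.sum_congr rfl fun j _ => ?_
              rw [Finset.sum_mul]
          _ ≤ ∑ ℓ : Fin d, ∑ j, cstar * Fp j ℓ := by
              refine Finset.sum_le_sum fun ℓ _ => Finset.sum_le_sum fun j _ => ?_
              exact mul_le_mul_of_nonneg_right (hcol j) (hFp0 j ℓ)
          _ = cstar * Sp := by
              rw [hSp, Finset.mul_sum, Finset.sum_comm]
              refine Finset.sum_congr rfl fun ℓ _ => ?_
              rw [Finset.mul_sum]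
      calc ∑ i, ∑ ℓ : Fin d, ∑ j,
          C i j * ((m_ i * Fu j ℓ + m_ j * Fu i ℓ) + (m_ i * Fp j ℓ + m_ j * Fu i ℓ))
          = (∑ i, ∑ ℓ : Fin d, ∑ j, C i j * m_ i * Fu j ℓ)
            + (∑ i, ∑ ℓ : Fin d, ∑ j, C i j * m_ j * Fu i ℓ)
            + ((∑ i, ∑ ℓ : Fin d, ∑ j, C i j * m_ i * Fp j ℓ)
            + (∑ i, ∑ ℓ : Fin d, ∑ j, C i j * m_ j * Fu i ℓ)) := by
            simp only [hexp, Finset.sum_add_distrib]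
        _ ≤ cstar * Su + cstar * Su + (cstar * Sp + cstar * Su) :=
            add_le_add (add_le_add hT1 hT2) (add_le_add hT3 hT2)
        _ = cstar * (3 * Su + Sp) := by ring
    calc Xc M u p ≤ _ := step1
      _ ≤ ∑ i, ∑ ℓ : Fin d, ∑ j,
          C i j * ((m_ i * Fu j ℓ + m_ j * Fu i ℓ) + (m_ i * Fp j ℓ + m_ j * Fu i ℓ)) :=
          Finset.sum_le_sum fun i _ => Finset.sum_le_sum fun ℓ _ =>
            Finset.sum_le_sum fun j _ => step2 i j ℓ
      _ ≤ cstar * (3 * Su + Sp) := step3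
  -- identify the right-hand side
  have hrhs : ∑ i, ∑ K : Cell M, ∑ ℓ : Fin d, τ M ℓ *
      (3 * (Real.sqrt (u i (shift M K ℓ 1)) - Real.sqrt (u i K)) ^ 2
        + (Real.sqrt (uprev i (shift M K ℓ 1)) - Real.sqrt (uprev i K)) ^ 2)
      = 3 * Su + Sp := by
    have hper : ∀ i : Fin n, ∑ K : Cell M, ∑ ℓ : Fin d, τ M ℓ *
        (3 * (Real.sqrt (u i (shift M K ℓ 1)) - Real.sqrt (u i K)) ^ 2
          + (Real.sqrt (uprev i (shift M K ℓ 1)) - Real.sqrt (uprev i K)) ^ 2)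
        = 3 * (∑ ℓ : Fin d, Fu i ℓ) + ∑ ℓ : Fin d, Fp i ℓ := by
      intro i
      rw [Finset.sum_comm]
      calc ∑ ℓ : Fin d, ∑ K : Cell M, τ M ℓ *
          (3 * (Real.sqrt (u i (shift M K ℓ 1)) - Real.sqrt (u i K)) ^ 2
            + (Real.sqrt (uprev i (shift M K ℓ 1)) - Real.sqrt (uprev i K)) ^ 2)
          = ∑ ℓ : Fin d, (3 * Fu i ℓ + Fp i ℓ) := by
            refine Finset.sum_congr rfl fun ℓ _ => ?_
            rw [hFu, hFp]
            simp only
            rw [Finset.mul_sum, ← Finset.sum_add_distrib]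
            refine Finset.sum_congr rfl fun K _ => by ring
        _ = 3 * (∑ ℓ : Fin d, Fu i ℓ) + ∑ ℓ : Fin d, Fp i ℓ := by
            rw [Finset.sum_add_distrib, Finset.mul_sum]
    calc ∑ i, ∑ K : Cell M, ∑ ℓ : Fin d, τ M ℓ *
        (3 * (Real.sqrt (u i (shift M K ℓ 1)) - Real.sqrt (u i K)) ^ 2
          + (Real.sqrt (uprev i (shift M K ℓ 1)) - Real.sqrt (uprev i K)) ^ 2)
        = ∑ i, (3 * (∑ ℓ : Fin d, Fu i ℓ) + ∑ ℓ : Fin d, Fp i ℓ) :=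
          Finset.sum_congr rfl fun i _ => hper i
      _ = 3 * Su + Sp := by
          rw [hSu, hSp, Finset.sum_add_distrib, Finset.mul_sum]
  rw [hrhs]
  exact hkey

end SG
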